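/- Let μ be a finite measure on a measurable space X with total mass γ₀ = μ(X) ∈ (0, ∞), let 0 ≤ a with a·γ₀ < 1, let K > 0, ε > 0, and let g, g₀ be densities with respect to μ such that 2 − 2∫_X √(g·g₀) dμ ≥ K²ε² (i.e., d_H²(g, g₀) ≥ K²ε²). With the shifted densities g_a := a + (1 − aγ₀)·g and g_{0,a} := a + (1 − aγ₀)·g₀, one has 1 − ∫_X √(g_a·g_{0,a}) dμ ≥ [(1 − aγ₀) − 4√(aγ₀(1 − aγ₀))/(K²ε²)]·(1 − ∫_X √(g·g₀) dμ). -/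

import Mathlib

open MeasureTheory

section helpers
lemma sqrt_le_half_one_add {u : ℝ} (hu : 0 ≤ u) : Real.sqrt u ≤ (1 + u) / 2 := by
  nlinarith [Real.sq_sqrt hu, Real.sqrt_nonneg u, sq_nonneg (Real.sqrt u - 1)]

lemma sqrt_mul_le_half {u v : ℝ} (hu : 0 ≤ u) (hv : 0 ≤ v) :
    Real.sqrt (u * v) ≤ (u + v) / 2 := by
  rw [Real.sqrt_mul hu]
  nlinarith [Real.sq_sqrt hu, Real.sq_sqrt hv, sq_nonneg (Real.sqrt u - Real.sqrt v),
    Real.sqrt_nonneg u, Real.sqrt_nonneg v]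

lemma pt_bound (a c u v : ℝ) (ha : 0 ≤ a) (hc : 0 ≤ c) (hu : 0 ≤ u) (hv : 0 ≤ v) :
    Real.sqrt ((a + c * u) * (a + c * v))
      ≤ a + c * Real.sqrt (u * v) + Real.sqrt (a * c) * |Real.sqrt u - Real.sqrt v| := by
  have h1 : Real.sqrt u ^ 2 = u := Real.sq_sqrt hu
  have h2 : Real.sqrt v ^ 2 = v := Real.sq_sqrt hv
  have h3 : Real.sqrt (u * v) = Real.sqrt u * Real.sqrt v := Real.sqrt_mul hu v
  have h4 : Real.sqrt (a * c) ^ 2 = a * c := Real.sq_sqrt (mul_nonneg ha hc)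
  have h12 : Real.sqrt u ^ 2 * Real.sqrt v ^ 2 = u * v := by rw [h1, h2]
  have hR : 0 ≤ a + c * Real.sqrt (u * v) + Real.sqrt (a * c) * |Real.sqrt u - Real.sqrt v| := by
    positivity
  have hmid : 0 ≤ (a + c * (Real.sqrt u * Real.sqrt v)) *
      (Real.sqrt (a * c) * |Real.sqrt u - Real.sqrt v|) := by positivity
  have key : (a + c * u) * (a + c * v)
      ≤ (a + c * Real.sqrt (u * v) + Real.sqrt (a * c) * |Real.sqrt u - Real.sqrt v|) ^ 2 := by
    rw [h3]
    have h5 : (Real.sqrt (a * c) * |Real.sqrt u - Real.sqrt v|) ^ 2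
        = a * c * (Real.sqrt u - Real.sqrt v) ^ 2 := by
      rw [mul_pow, h4, sq_abs]
    have hident : (a + c * (Real.sqrt u * Real.sqrt v)
          + Real.sqrt (a * c) * |Real.sqrt u - Real.sqrt v|) ^ 2
        = (a + c * u) * (a + c * v)
          + 2 * ((a + c * (Real.sqrt u * Real.sqrt v))
            * (Real.sqrt (a * c) * |Real.sqrt u - Real.sqrt v|)) := by
      linear_combination c ^ 2 * h12 + h5 + a * c * h1 + a * c * h2
    linarith [hmid, hident.ge, hident.le]
  calc Real.sqrt ((a + c * u) * (a + c * v))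
      ≤ Real.sqrt ((a + c * Real.sqrt (u * v) + Real.sqrt (a * c) * |Real.sqrt u - Real.sqrt v|) ^ 2) :=
        Real.sqrt_le_sqrt key
    _ = _ := Real.sqrt_sq hR
end helpers

/-- Inequality (3.16): on the event where the Hellinger distance of `(g, g₀)` is at
least `Kε`, the affinity defect of the shifted pair dominates that of the original
pair up to the factor `(1 - aγ₀) - 4√(aγ₀(1 - aγ₀))/(K²ε²)`. -/
theorem shifted_affinity_ratio_lower_bound {X : Type*} [MeasurableSpace X]
    (μ : Measure X) [IsFiniteMeasure μ]
    (γ₀ : ℝ) (hγ₀ : γ₀ = (μ Set.univ).toReal) (hγpos : 0 < γ₀)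
    (a : ℝ) (ha : 0 ≤ a) (haγ : a * γ₀ < 1)
    (K ε : ℝ) (hK : 0 < K) (hε : 0 < ε)
    (g g₀ : X → ℝ) (hgm : Measurable g) (hg₀m : Measurable g₀)
    (hg0 : ∀ x, 0 ≤ g x) (hg₀0 : ∀ x, 0 ≤ g₀ x)
    (hgi : Integrable g μ) (hg₀i : Integrable g₀ μ)
    (hg1 : ∫ x, g x ∂μ = 1) (hg₀1 : ∫ x, g₀ x ∂μ = 1)
    (hsep : K ^ 2 * ε ^ 2 ≤ 2 - 2 * ∫ x, Real.sqrt (g x * g₀ x) ∂μ) :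
    ((1 - a * γ₀) - 4 * Real.sqrt (a * γ₀ * (1 - a * γ₀)) / (K ^ 2 * ε ^ 2))
        * (1 - ∫ x, Real.sqrt (g x * g₀ x) ∂μ)
      ≤ 1 - ∫ x, Real.sqrt ((a + (1 - a * γ₀) * g x) * (a + (1 - a * γ₀) * g₀ x)) ∂μ := by
  set c : ℝ := 1 - a * γ₀ with hc_def
  have hc : 0 < c := by simp only [hc_def]; linarith
  set ρ : ℝ := ∫ x, Real.sqrt (g x * g₀ x) ∂μ with hρ_def
  have hρ0 : 0 ≤ ρ := integral_nonneg fun x => Real.sqrt_nonneg _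
  have hKε : 0 < K ^ 2 * ε ^ 2 := by positivity
  have hApos : 0 < 1 - ρ := by nlinarith
  -- integrability facts
  have hI1 : Integrable (fun x => Real.sqrt (g x * g₀ x)) μ := by
    refine Integrable.mono' ((hgi.add hg₀i).div_const 2)
      ((hgm.mul hg₀m).sqrt.aestronglyMeasurable) (ae_of_all _ fun x => ?_)
    rw [Real.norm_of_nonneg (Real.sqrt_nonneg _)]
    exact sqrt_mul_le_half (hg0 x) (hg₀0 x)
  have hsg : Integrable (fun x => Real.sqrt (g x)) μ := by
    refine Integrable.mono' (((integrable_const (1:ℝ)).add hgi).div_const 2)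
      (hgm.sqrt.aestronglyMeasurable) (ae_of_all _ fun x => ?_)
    rw [Real.norm_of_nonneg (Real.sqrt_nonneg _)]
    exact sqrt_le_half_one_add (hg0 x)
  have hsg₀ : Integrable (fun x => Real.sqrt (g₀ x)) μ := by
    refine Integrable.mono' (((integrable_const (1:ℝ)).add hg₀i).div_const 2)
      (hg₀m.sqrt.aestronglyMeasurable) (ae_of_all _ fun x => ?_)
    rw [Real.norm_of_nonneg (Real.sqrt_nonneg _)]
    exact sqrt_le_half_one_add (hg₀0 x)
  have hdiff : Integrable (fun x => |Real.sqrt (g x) - Real.sqrt (g₀ x)|) μ := (hsg.sub hsg₀).abs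
  have hIa : Integrable (fun x => Real.sqrt ((a + c * g x) * (a + c * g₀ x))) μ := by
    refine Integrable.mono'
      ((((integrable_const a).add (hgi.const_mul c)).add
        ((integrable_const a).add (hg₀i.const_mul c))).div_const 2)
      (((measurable_const.add (hgm.const_mul c)).mul
        (measurable_const.add (hg₀m.const_mul c))).sqrt.aestronglyMeasurable)
      (ae_of_all _ fun x => ?_)
    rw [Real.norm_of_nonneg (Real.sqrt_nonneg _)]
    exact sqrt_mul_le_half (add_nonneg ha (mul_nonneg hc.le (hg0 x)))
      (add_nonneg ha (mul_nonneg hc.le (hg₀0 x)))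
  set D : ℝ := ∫ x, |Real.sqrt (g x) - Real.sqrt (g₀ x)| ∂μ with hD_def
  have hD0 : 0 ≤ D := integral_nonneg fun x => abs_nonneg _
  -- integral of the pointwise bound
  have hmono : (∫ x, Real.sqrt ((a + c * g x) * (a + c * g₀ x)) ∂μ)
      ≤ γ₀ * a + c * ρ + Real.sqrt (a * c) * D := by
    have step : (∫ x, Real.sqrt ((a + c * g x) * (a + c * g₀ x)) ∂μ)
        ≤ ∫ x, (a + c * Real.sqrt (g x * g₀ x)
            + Real.sqrt (a * c) * |Real.sqrt (g x) - Real.sqrt (g₀ x)|) ∂μ := by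
      refine integral_mono hIa ?_ fun x => pt_bound a c (g x) (g₀ x) ha hc.le (hg0 x) (hg₀0 x)
      exact ((integrable_const a).add (hI1.const_mul c)).add (hdiff.const_mul _)
    calc (∫ x, Real.sqrt ((a + c * g x) * (a + c * g₀ x)) ∂μ) ≤ _ := step
      _ = γ₀ * a + c * ρ + Real.sqrt (a * c) * D := by
        have hi1 : Integrable (fun x => a + c * Real.sqrt (g x * g₀ x)) μ :=
          (integrable_const a).add (hI1.const_mul c)
        rw [integral_add hi1 (hdiff.const_mul _),
          integral_add (integrable_const a) (hI1.const_mul c),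
          integral_const, integral_const_mul, integral_const_mul, measureReal_def, hγ₀, smul_eq_mul]
  -- ∫ (√g - √g₀)^2 = 2 - 2ρ
  have hsq_eq : ∀ x, |Real.sqrt (g x) - Real.sqrt (g₀ x)| ^ 2
      = g x + g₀ x - 2 * Real.sqrt (g x * g₀ x) := fun x => by
    rw [sq_abs]
    linear_combination Real.sq_sqrt (hg0 x) + Real.sq_sqrt (hg₀0 x)
      + 2 * Real.sqrt_mul (hg0 x) (g₀ x)
  have hInt_hsq : Integrable (fun x => |Real.sqrt (g x) - Real.sqrt (g₀ x)| ^ 2) μ :=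
    ((hgi.add hg₀i).sub (hI1.const_mul 2)).congr (ae_of_all _ fun x => (hsq_eq x).symm)
  have hHsq : (∫ x, |Real.sqrt (g x) - Real.sqrt (g₀ x)| ^ 2 ∂μ) = 2 - 2 * ρ := by
    have hadd : Integrable (fun x => g x + g₀ x) μ := hgi.add hg₀i
    rw [integral_congr_ae (ae_of_all _ hsq_eq),
      integral_sub hadd (hI1.const_mul 2), integral_add hgi hg₀i,
      hg1, hg₀1, integral_const_mul]
    ring
  -- Cauchy–Schwarz
  have hCS : D ≤ Real.sqrt (2 - 2 * ρ) * Real.sqrt γ₀ := by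
    have htwo : (ENNReal.ofReal (2:ℝ)) = 2 := by norm_num
    have hmeas : AEStronglyMeasurable (fun x => |Real.sqrt (g x) - Real.sqrt (g₀ x)|) μ :=
      ((hgm.sqrt.sub hg₀m.sqrt).abs).aestronglyMeasurable
    have hmem : MemLp (fun x => |Real.sqrt (g x) - Real.sqrt (g₀ x)|) (ENNReal.ofReal 2) μ := by
      rw [htwo]
      exact (memLp_two_iff_integrable_sq hmeas).mpr hInt_hsq
    have hmem1 : MemLp (fun _ : X => (1:ℝ)) (ENNReal.ofReal 2) μ := by
      rw [htwo]; exact memLp_const 1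
    have h := integral_mul_le_Lp_mul_Lq_of_nonneg (p := 2) (q := 2)
      Real.HolderConjugate.two_two (ae_of_all _ fun x => abs_nonneg _)
      (ae_of_all _ fun _ => zero_le_one) hmem hmem1
    simp only [mul_one, Real.one_rpow] at h
    have hrw : ∀ x, |Real.sqrt (g x) - Real.sqrt (g₀ x)| ^ (2:ℝ)
        = |Real.sqrt (g x) - Real.sqrt (g₀ x)| ^ 2 := fun x => by
      rw [show ((2:ℝ) = ((2:ℕ):ℝ)) by norm_num, Real.rpow_natCast]
    rw [integral_congr_ae (ae_of_all _ hrw), hHsq, integral_const, smul_eq_mul, mul_one,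
      measureReal_def, ← hγ₀] at h
    calc D ≤ (2 - 2 * ρ) ^ ((1:ℝ)/2) * γ₀ ^ ((1:ℝ)/2) := h
      _ = Real.sqrt (2 - 2 * ρ) * Real.sqrt γ₀ := by
        rw [Real.sqrt_eq_rpow, Real.sqrt_eq_rpow]
  -- √(2-2ρ) ≤ 4(1-ρ)/(K²ε²)
  have h2A0 : (0:ℝ) ≤ 2 - 2 * ρ := by linarith
  have ht2 : Real.sqrt (2 - 2 * ρ) ^ 2 = 2 - 2 * ρ := Real.sq_sqrt h2A0
  have htle : Real.sqrt (2 - 2 * ρ) ≤ 2 := by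
    have h4 : Real.sqrt 4 = 2 := by
      rw [show (4:ℝ) = 2 ^ 2 by norm_num, Real.sqrt_sq (by norm_num : (0:ℝ) ≤ 2)]
    calc Real.sqrt (2 - 2 * ρ) ≤ Real.sqrt 4 := Real.sqrt_le_sqrt (by linarith)
      _ = 2 := h4
  have hsqA : Real.sqrt (2 - 2 * ρ) ≤ 4 * (1 - ρ) / (K ^ 2 * ε ^ 2) := by
    rw [le_div_iff₀ hKε]
    nlinarith [Real.sqrt_nonneg (2 - 2 * ρ), ht2, htle, hsep,
      mul_le_mul_of_nonneg_left hsep (Real.sqrt_nonneg (2 - 2 * ρ)),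
      mul_le_mul_of_nonneg_left htle (sq_nonneg (Real.sqrt (2 - 2 * ρ)))]
  -- combine
  have hs_eq : Real.sqrt (a * c) * Real.sqrt γ₀ = Real.sqrt (a * γ₀ * c) := by
    rw [← Real.sqrt_mul (mul_nonneg ha hc.le)]
    congr 1; ring
  have hs0 : 0 ≤ Real.sqrt (a * γ₀ * c) := Real.sqrt_nonneg _
  have hac0 : 0 ≤ Real.sqrt (a * c) := Real.sqrt_nonneg _
  have hDC : Real.sqrt (a * c) * D ≤ Real.sqrt (a * γ₀ * c) * Real.sqrt (2 - 2 * ρ) := by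
    calc Real.sqrt (a * c) * D ≤ Real.sqrt (a * c) * (Real.sqrt (2 - 2 * ρ) * Real.sqrt γ₀) :=
          mul_le_mul_of_nonneg_left hCS hac0
      _ = Real.sqrt (a * γ₀ * c) * Real.sqrt (2 - 2 * ρ) := by rw [← hs_eq]; ring
  have hfin : Real.sqrt (a * γ₀ * c) * Real.sqrt (2 - 2 * ρ)
      ≤ Real.sqrt (a * γ₀ * c) * (4 * (1 - ρ) / (K ^ 2 * ε ^ 2)) :=
    mul_le_mul_of_nonneg_left hsqA hs0
  have hring : (c - 4 * Real.sqrt (a * γ₀ * c) / (K ^ 2 * ε ^ 2)) * (1 - ρ)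
      = c * (1 - ρ) - Real.sqrt (a * γ₀ * c) * (4 * (1 - ρ) / (K ^ 2 * ε ^ 2)) := by
    field_simp
  have hcA : c * (1 - ρ) = 1 - γ₀ * a - c * ρ := by rw [hc_def]; ring
  nlinarith [hmono, hDC, hfin, hring, hcA, hc_def]
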